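/- Let n ≥ 3 be an integer, let a and b be positive rational numbers with ν_2(a) = ν_2(b) = 0, and let c be an odd positive integer. Consider g(x) = x^{3n} + 2a·x^{2n−2} + 4b·x^{n−2} + 8c ∈ ℚ[x]. Then g is eventually stable over ℚ; more precisely, for every integer k ≥ 1 the number of irreducible factors of the k-th iterate g^k(x) over ℚ, counted with multiplicity, is at most 3. Moreover 0 is not preperiodic under g: the sequence of values satisfies 8 ≤ g(0) < g²(0) < g³(0) < ⋯. -/

import Mathlib

open Polynomial

/-- The `n`-th compositional iterate of `f`: `f^0 = X`, `f^{n+1} = f ∘ f^n`. -/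
noncomputable def polyIter (f : Polynomial ℚ) : ℕ → Polynomial ℚ
  | 0 => Polynomial.X
  | n + 1 => f.comp (polyIter f n)

/-- The `p`-adic valuation of a rational number, viewed as a rational number. -/
def nuQ (p : ℕ) (x : ℚ) : ℚ := (padicValRat p x : ℚ)

/-- `NP_p(h)` has successive vertices `(xs 0, ys 0), …, (xs t, ys t)`:
the corresponding coefficients are nonzero and have the prescribed valuations,
the slopes are strictly increasing, and every point of the Newton diagram lies
on or above the polygon. -/
def HasNPVertices (p : ℕ) (h : Polynomial ℚ) (t : ℕ) (xs : ℕ → ℕ) (ys : ℕ → ℚ) : Prop :=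
  h.coeff 0 ≠ 0 ∧
  xs 0 = 0 ∧ xs t = h.natDegree ∧
  (∀ s, s < t → xs s < xs (s + 1)) ∧
  (∀ s, s ≤ t → h.coeff (h.natDegree - xs s) ≠ 0 ∧
      nuQ p (h.coeff (h.natDegree - xs s)) = ys s) ∧
  (∀ s, 1 ≤ s → s < t →
      (ys s - ys (s - 1)) / ((xs s : ℚ) - (xs (s - 1) : ℚ)) <
        (ys (s + 1) - ys s) / ((xs (s + 1) : ℚ) - (xs s : ℚ))) ∧
  (∀ s, 1 ≤ s → s ≤ t → ∀ i, h.coeff i ≠ 0 →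
      xs (s - 1) ≤ h.natDegree - i → h.natDegree - i ≤ xs s →
      ys (s - 1) + ((ys s - ys (s - 1)) / ((xs s : ℚ) - (xs (s - 1) : ℚ))) *
          (((h.natDegree - i : ℕ) : ℚ) - (xs (s - 1) : ℚ)) ≤ nuQ p (h.coeff i))

/-- The number of irreducible factors of a polynomial over `ℚ`,
counted with multiplicity. -/
noncomputable def numFactors (P : Polynomial ℚ) : ℕ :=
  (UniqueFactorizationMonoid.factors P).card

/-- `f` is `p^r`-pure. -/
def IsPpure (p r : ℕ) (f : Polynomial ℚ) : Prop :=
  f.coeff 0 ≠ 0 ∧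
  padicValRat p f.leadingCoeff = 0 ∧
  padicValRat p (f.coeff 0) = (r : ℤ) ∧
  ∀ i, 0 < i → i < f.natDegree → f.coeff i ≠ 0 →
    (r : ℚ) / (f.natDegree : ℚ) ≤ nuQ p (f.coeff i) / ((f.natDegree : ℚ) - (i : ℚ))

/-- valuation -/
noncomputable def nv (x : ℚ) : ℚ := (padicValRat 2 x : ℚ)

lemma nv_mul {x y : ℚ} (hx : x ≠ 0) (hy : y ≠ 0) : nv (x * y) = nv x + nv y := by
  unfold nv; rw [padicValRat.mul hx hy]; push_cast; ring

lemma nv_one : nv 1 = 0 := by simp [nv]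

lemma nv_add_ge {x y m : ℚ} (hx : x = 0 ∨ m ≤ nv x) (hy : y = 0 ∨ m ≤ nv y) :
    x + y = 0 ∨ m ≤ nv (x + y) := by
  rcases hx with hx | hx
  · simpa [hx] using hy
  rcases hy with hy | hy
  · simpa [hy] using Or.inr hx
  by_cases hxy : x + y = 0
  · exact Or.inl hxy
  · exact Or.inr <| le_trans (le_min hx hy) (by
      have := padicValRat.min_le_padicValRat_add (p := 2) hxy
      unfold nv
      push_cast
      exact_mod_cast this)

lemma nv_add_gt {x y m : ℚ} (hx : x = 0 ∨ m < nv x) (hy : y = 0 ∨ m < nv y) :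
    x + y = 0 ∨ m < nv (x + y) := by
  rcases hx with hx | hx
  · simpa [hx] using hy
  rcases hy with hy | hy
  · simpa [hy] using Or.inr hx
  by_cases hxy : x + y = 0
  · exact Or.inl hxy
  · exact Or.inr <| lt_of_lt_of_le (lt_min hx hy) (by
      have := padicValRat.min_le_padicValRat_add (p := 2) hxy
      unfold nv
      push_cast
      exact_mod_cast this)

lemma nv_neg (x : ℚ) : nv (-x) = nv x := by simp [nv]

lemma nv_add_exact {x y m : ℚ} (hx : x ≠ 0) (hm : nv x = m) (hy : y = 0 ∨ m < nv y) :
    x + y ≠ 0 ∧ nv (x + y) = m := by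
  rcases hy with hy | hy
  · simpa [hy] using ⟨hx, hm⟩
  have hne : x + y ≠ 0 := by
    intro h
    have : y = -x := by linarith
    rw [this, nv_neg, hm] at hy; linarith
  refine ⟨hne, ?_⟩
  have h1 : m ≤ nv (x + y) := by
    rcases nv_add_ge (Or.inr hm.ge) (Or.inr hy.le) with h | h
    · exact absurd h hne
    · exact h
  -- x = (x+y) + (-y)
  have h2 : x = (x + y) + (-y) := by ring
  by_contra hne2
  have hlt : m < nv (x + y) := lt_of_le_of_ne h1 (Ne.symm hne2)
  have : x = 0 ∨ m < nv x := by
    rw [h2]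
    exact nv_add_gt (Or.inr hlt) (Or.inr (by rwa [nv_neg]))
  rcases this with h | h
  · exact hx h
  · rw [hm] at h; exact lt_irrefl _ h

lemma nv_sum_ge {ι : Type*} {s : Finset ι} {f : ι → ℚ} {m : ℚ}
    (h : ∀ i ∈ s, f i = 0 ∨ m ≤ nv (f i)) :
    s.sum f = 0 ∨ m ≤ nv (s.sum f) := by
  classical
  induction s using Finset.induction_on with
  | empty => simp
  | @insert a s hx ih =>
    rw [Finset.sum_insert hx]
    exact nv_add_ge (h a (Finset.mem_insert_self a s))
      (ih fun i hi => h i (Finset.mem_insert_of_mem hi))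

lemma nv_sum_gt {ι : Type*} {s : Finset ι} {f : ι → ℚ} {m : ℚ}
    (h : ∀ i ∈ s, f i = 0 ∨ m < nv (f i)) :
    s.sum f = 0 ∨ m < nv (s.sum f) := by
  classical
  induction s using Finset.induction_on with
  | empty => simp
  | @insert a s hx ih =>
    rw [Finset.sum_insert hx]
    exact nv_add_gt (h a (Finset.mem_insert_self a s))
      (ih fun i hi => h i (Finset.mem_insert_of_mem hi))

lemma nv_sum_exact {ι : Type*} {s : Finset ι} {f : ι → ℚ} {m : ℚ} {i0 : ι}
    (hi0 : i0 ∈ s) (hne : f i0 ≠ 0) (hval : nv (f i0) = m)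
    (h : ∀ i ∈ s, i ≠ i0 → f i = 0 ∨ m < nv (f i)) :
    s.sum f ≠ 0 ∧ nv (s.sum f) = m := by
  classical
  rw [← Finset.add_sum_erase s f hi0]
  refine nv_add_exact hne hval ?_
  refine nv_sum_gt fun i hi => h i (Finset.mem_of_mem_erase hi) (Finset.ne_of_mem_erase hi)
/-- weighted valuation of coefficient `j` -/
noncomputable def wvv (t : ℚ) (P : Polynomial ℚ) (j : ℕ) : ℚ := nv (P.coeff j) + t * j

/-- Newton polygon segment data: `m` is the minimum weighted valuation at weight `t`,
attained first at `x` and last at `y`. -/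
structure Seg (t : ℚ) (P : Polynomial ℚ) (m : ℚ) (x y : ℕ) : Prop where
  above : ∀ j, P.coeff j ≠ 0 → m ≤ wvv t P j
  nzx : P.coeff x ≠ 0
  valx : wvv t P x = m
  nzy : P.coeff y ≠ 0
  valy : wvv t P y = m
  sltx : ∀ j, j < x → P.coeff j ≠ 0 → m < wvv t P j
  sgty : ∀ j, y < j → P.coeff j ≠ 0 → m < wvv t P j

namespace Seg

lemma ne_zero {t : ℚ} {P : Polynomial ℚ} {m : ℚ} {x y : ℕ} (h : Seg t P m x y) : P ≠ 0 :=
  fun h0 => h.nzx (by simp [h0])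

lemma x_le_y {t : ℚ} {P : Polynomial ℚ} {m : ℚ} {x y : ℕ} (h : Seg t P m x y) : x ≤ y := by
  by_contra hxy
  exact absurd h.valy (ne_of_gt (h.sltx y (by omega) h.nzy))

lemma y_le_natDegree {t : ℚ} {P : Polynomial ℚ} {m : ℚ} {x y : ℕ} (h : Seg t P m x y) :
    y ≤ P.natDegree := Polynomial.le_natDegree_of_ne_zero h.nzy

lemma unique {t : ℚ} {P : Polynomial ℚ} {m m' : ℚ} {x y x' y' : ℕ}
    (h : Seg t P m x y) (h' : Seg t P m' x' y') : m = m' ∧ x = x' ∧ y = y' := by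
  have hm : m = m' := le_antisymm
    (h'.valx ▸ h.above x' h'.nzx) (h.valx ▸ h'.above x h.nzx)
  subst hm
  refine ⟨rfl, ?_, ?_⟩
  · rcases lt_trichotomy x x' with hc | hc | hc
    · exact absurd h.valx (ne_of_gt (h'.sltx x hc h.nzx))
    · exact hc
    · exact absurd h'.valx (ne_of_gt (h.sltx x' hc h'.nzx))
  · rcases lt_trichotomy y y' with hc | hc | hc
    · exact absurd h'.valy (ne_of_gt (h.sgty y' hc h'.nzy))
    · exact hc
    · exact absurd h.valy (ne_of_gt (h'.sgty y hc h.nzy))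

end Seg

lemma seg_C {t : ℚ} {r : ℚ} (hr : r ≠ 0) : Seg t (Polynomial.C r) (nv r) 0 0 := by
  have hc : ∀ j, (Polynomial.C r).coeff j ≠ 0 → j = 0 := by
    intro j hj
    by_contra h0
    rw [Polynomial.coeff_C, if_neg h0] at hj
    exact hj rfl
  refine ⟨?_, by simpa using hr, by simp [wvv], by simpa using hr, by simp [wvv], ?_, ?_⟩
  · intro j hj
    have := hc j hj
    subst this
    simp [wvv]
  · intro j hj; omega
  · intro j hj hne
    have := hc j hne
    omega

lemma seg_one {t : ℚ} : Seg t (1 : Polynomial ℚ) 0 0 0 := by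
  have := seg_C (t := t) (r := (1 : ℚ)) one_ne_zero
  rw [nv_one] at this
  simpa using this

lemma seg_X {t : ℚ} : Seg t Polynomial.X t 1 1 := by
  have hc : ∀ j, (Polynomial.X : Polynomial ℚ).coeff j ≠ 0 → j = 1 := by
    intro j hj
    by_contra h0
    rw [Polynomial.coeff_X, if_neg (Ne.symm h0)] at hj
    exact hj rfl
  refine ⟨?_, by simp, by simp [wvv, nv_one], by simp, by simp [wvv, nv_one], ?_, ?_⟩
  · intro j hj
    have := hc j hj
    subst this
    simp [wvv, nv_one]
  · intro j hj hne
    have := hc j hne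
    omega
  · intro j hj hne
    have := hc j hne
    omega

lemma seg_mul {t : ℚ} {P Q : Polynomial ℚ} {m m' : ℚ} {x y x' y' : ℕ}
    (hP : Seg t P m x y) (hQ : Seg t Q m' x' y') :
    Seg t (P * Q) (m + m') (x + x') (y + y') := by
  classical
  have hbound : ∀ (j u v : ℕ), u + v = j → P.coeff u ≠ 0 → Q.coeff v ≠ 0 →
      m + m' - t * j ≤ nv (P.coeff u * Q.coeff v) := by
    intro j u v hz h1 h2
    rw [nv_mul h1 h2]
    have b1 := hP.above u h1
    have b2 := hQ.above v h2
    unfold wvv at b1 b2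
    have hmul : t * (u : ℚ) + t * (v : ℚ) = t * (j : ℚ) := by
      rw [← mul_add]; congr 1; exact_mod_cast congrArg (Nat.cast : ℕ → ℚ) hz
    linarith
  have hboundP : ∀ (j u v : ℕ), u + v = j → P.coeff u ≠ 0 → Q.coeff v ≠ 0 →
      (m < wvv t P u) → m + m' - t * j < nv (P.coeff u * Q.coeff v) := by
    intro j u v hz h1 h2 hs
    rw [nv_mul h1 h2]
    have b2 := hQ.above v h2
    unfold wvv at hs b2
    have hmul : t * (u : ℚ) + t * (v : ℚ) = t * (j : ℚ) := by
      rw [← mul_add]; congr 1; exact_mod_cast congrArg (Nat.cast : ℕ → ℚ) hz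
    linarith
  have hboundQ : ∀ (j u v : ℕ), u + v = j → P.coeff u ≠ 0 → Q.coeff v ≠ 0 →
      (m' < wvv t Q v) → m + m' - t * j < nv (P.coeff u * Q.coeff v) := by
    intro j u v hz h1 h2 hs
    rw [nv_mul h1 h2]
    have b1 := hP.above u h1
    unfold wvv at hs b1
    have hmul : t * (u : ℚ) + t * (v : ℚ) = t * (j : ℚ) := by
      rw [← mul_add]; congr 1; exact_mod_cast congrArg (Nat.cast : ℕ → ℚ) hz
    linarith
  have above : ∀ j, (P * Q).coeff j ≠ 0 → m + m' ≤ wvv t (P * Q) j := by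
    intro j hj
    rw [Polynomial.coeff_mul] at hj
    have key : ∀ z ∈ Finset.HasAntidiagonal.antidiagonal j,
        P.coeff z.1 * Q.coeff z.2 = 0 ∨
          m + m' - t * j ≤ nv (P.coeff z.1 * Q.coeff z.2) := by
      rintro ⟨u, v⟩ hz
      rw [Finset.HasAntidiagonal.mem_antidiagonal] at hz
      by_cases h1 : P.coeff u = 0
      · simp [h1]
      by_cases h2 : Q.coeff v = 0
      · simp [h2]
      exact Or.inr (hbound j u v hz h1 h2)
    rcases nv_sum_ge key with h | h
    · exact absurd h hj
    · unfold wvv; rw [Polynomial.coeff_mul]; linarith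
  -- exactness helper
  have exact : ∀ u v : ℕ, P.coeff u ≠ 0 → Q.coeff v ≠ 0 →
      wvv t P u = m → wvv t Q v = m' →
      (∀ w w' : ℕ, w + w' = u + v → (w, w') ≠ (u, v) → P.coeff w ≠ 0 → Q.coeff w' ≠ 0 →
         m < wvv t P w ∨ m' < wvv t Q w') →
      (P * Q).coeff (u + v) ≠ 0 ∧ wvv t (P * Q) (u + v) = m + m' := by
    intro u v h1 h2 e1 e2 hstrict
    have h0 : ((u, v) : ℕ × ℕ) ∈ Finset.HasAntidiagonal.antidiagonal (u + v) := by
      rw [Finset.HasAntidiagonal.mem_antidiagonal]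
    have hval : nv (P.coeff u * Q.coeff v) = m + m' - t * ((u + v : ℕ) : ℚ) := by
      rw [nv_mul h1 h2]
      unfold wvv at e1 e2
      push_cast
      linarith
    have hrest : ∀ z ∈ Finset.HasAntidiagonal.antidiagonal (u + v), z ≠ (u, v) →
        P.coeff z.1 * Q.coeff z.2 = 0 ∨
          m + m' - t * ((u + v : ℕ) : ℚ) < nv (P.coeff z.1 * Q.coeff z.2) := by
      rintro ⟨w, w'⟩ hz hne
      rw [Finset.HasAntidiagonal.mem_antidiagonal] at hz
      by_cases hw1 : P.coeff w = 0
      · simp [hw1]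
      by_cases hw2 : Q.coeff w' = 0
      · simp [hw2]
      right
      rcases hstrict w w' hz hne hw1 hw2 with hs | hs
      · exact hboundP (u + v) w w' hz hw1 hw2 hs
      · exact hboundQ (u + v) w w' hz hw1 hw2 hs
    have := nv_sum_exact (f := fun z : ℕ × ℕ => P.coeff z.1 * Q.coeff z.2) h0
      (mul_ne_zero h1 h2) hval hrest
    rw [← Polynomial.coeff_mul] at this
    refine ⟨this.1, ?_⟩
    unfold wvv
    rw [this.2]; ring
  have exlow := exact x x' hP.nzx hQ.nzx hP.valx hQ.valx (by
    intro w w' hz hne hw1 hw2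
    have : w < x ∨ w' < x' ∨ (w = x ∧ w' = x') := by omega
    rcases this with h | h | h
    · exact Or.inl (hP.sltx w h hw1)
    · exact Or.inr (hQ.sltx w' h hw2)
    · exact absurd (by rw [h.1, h.2]) hne)
  have exhigh := exact y y' hP.nzy hQ.nzy hP.valy hQ.valy (by
    intro w w' hz hne hw1 hw2
    have : y < w ∨ y' < w' ∨ (w = y ∧ w' = y') := by omega
    rcases this with h | h | h
    · exact Or.inl (hP.sgty w h hw1)
    · exact Or.inr (hQ.sgty w' h hw2)
    · exact absurd (by rw [h.1, h.2]) hne)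
  refine ⟨above, exlow.1, exlow.2, exhigh.1, exhigh.2, ?_, ?_⟩
  · intro j hjlt hj
    rw [Polynomial.coeff_mul] at hj
    have keys : ∀ z ∈ Finset.HasAntidiagonal.antidiagonal j,
        P.coeff z.1 * Q.coeff z.2 = 0 ∨
          m + m' - t * j < nv (P.coeff z.1 * Q.coeff z.2) := by
      rintro ⟨u, v⟩ hz
      rw [Finset.HasAntidiagonal.mem_antidiagonal] at hz
      by_cases h1 : P.coeff u = 0
      · simp [h1]
      by_cases h2 : Q.coeff v = 0
      · simp [h2]
      right
      have : u < x ∨ v < x' := by omega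
      rcases this with hu | hv
      · exact hboundP j u v hz h1 h2 (hP.sltx u hu h1)
      · exact hboundQ j u v hz h1 h2 (hQ.sltx v hv h2)
    rcases nv_sum_gt keys with h | h
    · exact absurd h hj
    · unfold wvv; rw [Polynomial.coeff_mul]; linarith
  · intro j hjlt hj
    rw [Polynomial.coeff_mul] at hj
    have keys : ∀ z ∈ Finset.HasAntidiagonal.antidiagonal j,
        P.coeff z.1 * Q.coeff z.2 = 0 ∨
          m + m' - t * j < nv (P.coeff z.1 * Q.coeff z.2) := by
      rintro ⟨u, v⟩ hz
      rw [Finset.HasAntidiagonal.mem_antidiagonal] at hz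
      by_cases h1 : P.coeff u = 0
      · simp [h1]
      by_cases h2 : Q.coeff v = 0
      · simp [h2]
      right
      have : y < u ∨ y' < v := by omega
      rcases this with hu | hv
      · exact hboundP j u v hz h1 h2 (hP.sgty u hu h1)
      · exact hboundQ j u v hz h1 h2 (hQ.sgty v hv h2)
    rcases nv_sum_gt keys with h | h
    · exact absurd h hj
    · unfold wvv; rw [Polynomial.coeff_mul]; linarith

lemma seg_pow {t : ℚ} {P : Polynomial ℚ} {m : ℚ} {x y : ℕ}
    (hP : Seg t P m x y) (k : ℕ) :
    Seg t (P ^ k) ((k : ℚ) * m) (k * x) (k * y) := by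
  induction k with
  | zero => simpa using seg_one
  | succ k ih =>
    have h2 := seg_mul ih hP
    rw [← pow_succ] at h2
    have e1 : (k + 1) * x = k * x + x := by ring
    have e2 : (k + 1) * y = k * y + y := by ring
    have e3 : ((k + 1 : ℕ) : ℚ) * m = (k : ℚ) * m + m := by push_cast; ring
    rw [e1, e2, e3]
    exact h2
/-- existence of a segment at any weight for a nonzero polynomial -/
lemma exists_seg (t : ℚ) {P : Polynomial ℚ} (hP : P ≠ 0) : ∃ m x y, Seg t P m x y := by
  classical
  have hsupp : P.support.Nonempty := Polynomial.nonempty_support_iff.mpr hP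
  set m := P.support.inf' hsupp (wvv t P) with hm
  have hach : (P.support.filter (fun j => wvv t P j = m)).Nonempty := by
    obtain ⟨i, hi, hival⟩ := Finset.exists_mem_eq_inf' hsupp (wvv t P)
    exact ⟨i, Finset.mem_filter.mpr ⟨hi, hival.symm⟩⟩
  set x := (P.support.filter (fun j => wvv t P j = m)).min' hach with hx
  set y := (P.support.filter (fun j => wvv t P j = m)).max' hach with hy
  have hxmem := (P.support.filter (fun j => wvv t P j = m)).min'_mem hach
  have hymem := (P.support.filter (fun j => wvv t P j = m)).max'_mem hach
  rw [Finset.mem_filter] at hxmem hymem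
  have habove : ∀ j, P.coeff j ≠ 0 → m ≤ wvv t P j := fun j hj =>
    Finset.inf'_le _ (Polynomial.mem_support_iff.mpr hj)
  refine ⟨m, x, y, habove, Polynomial.mem_support_iff.mp hxmem.1, hxmem.2,
    Polynomial.mem_support_iff.mp hymem.1, hymem.2, ?_, ?_⟩
  · intro j hjx hj
    rcases lt_or_eq_of_le (habove j hj) with h | h
    · exact h
    · exfalso
      have : x ≤ j := Finset.min'_le _ _
        (Finset.mem_filter.mpr ⟨Polynomial.mem_support_iff.mpr hj, h.symm⟩)
      omega
  · intro j hjy hj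
    rcases lt_or_eq_of_le (habove j hj) with h | h
    · exact h
    · exfalso
      have : j ≤ y := Finset.le_max' _ _
        (Finset.mem_filter.mpr ⟨Polynomial.mem_support_iff.mpr hj, h.symm⟩)
      omega

/-- monotonicity: if `t' < t` then the max index at `t` is at most the min index at `t'` -/
lemma seg_mono {t t' : ℚ} {P : Polynomial ℚ} {m m' : ℚ} {x y x' y' : ℕ}
    (h : Seg t P m x y) (h' : Seg t' P m' x' y') (htt : t' < t) : y ≤ x' := by
  by_contra hc
  push_neg at hc
  have h1 : m ≤ wvv t P x' := h.above x' h'.nzx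
  have h2 : m' ≤ wvv t' P y := h'.above y h.nzy
  rw [← h.valy] at h1
  rw [← h'.valx] at h2
  unfold wvv at h1 h2
  have hcast : (x' : ℚ) < (y : ℚ) := by exact_mod_cast hc
  nlinarith

/-- integrality of valuations: `t * (y - x)` is an integer -/
lemma seg_int {t : ℚ} {P : Polynomial ℚ} {m : ℚ} {x y : ℕ}
    (h : Seg t P m x y) :
    ∃ z : ℤ, t * (y : ℚ) - t * (x : ℚ) = (z : ℚ) := by
  refine ⟨padicValRat 2 (P.coeff x) - padicValRat 2 (P.coeff y), ?_⟩
  have e1 := h.valx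
  have e2 := h.valy
  unfold wvv nv at e1 e2
  push_cast
  linarith

/-- adding a polynomial all of whose weighted valuations exceed `m`
(suitably strictly around `[x, y]`) preserves the segment -/
lemma Seg.add_aux {t : ℚ} {P Q : Polynomial ℚ} {m : ℚ} {x y : ℕ}
    (h : Seg t P m x y)
    (habove : ∀ j, Q.coeff j ≠ 0 → m ≤ wvv t Q j)
    (hle : ∀ j, j ≤ x → Q.coeff j ≠ 0 → m < wvv t Q j)
    (hge : ∀ j, y ≤ j → Q.coeff j ≠ 0 → m < wvv t Q j) :
    Seg t (P + Q) m x y := by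
  have hco : ∀ j, (P + Q).coeff j = P.coeff j + Q.coeff j := fun j => Polynomial.coeff_add P Q j
  have key : ∀ j, (P + Q).coeff j ≠ 0 → m ≤ wvv t (P + Q) j := by
    intro j hj
    rw [hco j] at hj
    have := nv_add_ge (x := P.coeff j) (y := Q.coeff j) (m := m - t * j)
      (by rcases eq_or_ne (P.coeff j) 0 with h0 | h0
          · exact Or.inl h0
          · have := h.above j h0; unfold wvv at this; right; linarith)
      (by rcases eq_or_ne (Q.coeff j) 0 with h0 | h0
          · exact Or.inl h0
          · have := habove j h0; unfold wvv at this; right; linarith)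
    rcases this with h0 | h0
    · exact absurd h0 hj
    · unfold wvv; rw [hco j]; linarith
  have exact : ∀ i, P.coeff i ≠ 0 → wvv t P i = m → (Q.coeff i = 0 ∨ m < wvv t Q i) →
      (P + Q).coeff i ≠ 0 ∧ wvv t (P + Q) i = m := by
    intro i h1 e1 hq
    have := nv_add_exact (x := P.coeff i) (y := Q.coeff i) (m := m - t * i) h1
      (by unfold wvv at e1; linarith)
      (by rcases hq with h0 | h0
          · exact Or.inl h0
          · unfold wvv at h0; right; linarith)
    rw [← hco i] at this
    refine ⟨this.1, ?_⟩
    unfold wvv; rw [this.2]; ring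
  have strict : ∀ j, (m < wvv t P j ∨ P.coeff j = 0) → (m < wvv t Q j ∨ Q.coeff j = 0) →
      (P + Q).coeff j ≠ 0 → m < wvv t (P + Q) j := by
    intro j h1 h2 hj
    rw [hco j] at hj
    have := nv_add_gt (x := P.coeff j) (y := Q.coeff j) (m := m - t * j)
      (by rcases h1 with h0 | h0
          · unfold wvv at h0; right; linarith
          · exact Or.inl h0)
      (by rcases h2 with h0 | h0
          · unfold wvv at h0; right; linarith
          · exact Or.inl h0)
    rcases this with h0 | h0
    · exact absurd h0 hj
    · unfold wvv; rw [hco j]; linarith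
  have exl := exact x h.nzx h.valx (by
    rcases eq_or_ne (Q.coeff x) 0 with h0 | h0
    · exact Or.inl h0
    · exact Or.inr (hle x le_rfl h0))
  have exh := exact y h.nzy h.valy (by
    rcases eq_or_ne (Q.coeff y) 0 with h0 | h0
    · exact Or.inl h0
    · exact Or.inr (hge y le_rfl h0))
  refine ⟨key, exl.1, exl.2, exh.1, exh.2, ?_, ?_⟩
  · intro j hjx hj
    refine strict j ?_ ?_ hj
    · rcases eq_or_ne (P.coeff j) 0 with h0 | h0
      · exact Or.inr h0
      · exact Or.inl (h.sltx j hjx h0)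
    · rcases eq_or_ne (Q.coeff j) 0 with h0 | h0
      · exact Or.inr h0
      · exact Or.inl (hle j (by omega) h0)
  · intro j hjy hj
    refine strict j ?_ ?_ hj
    · rcases eq_or_ne (P.coeff j) 0 with h0 | h0
      · exact Or.inr h0
      · exact Or.inl (h.sgty j hjy h0)
    · rcases eq_or_ne (Q.coeff j) 0 with h0 | h0
      · exact Or.inr h0
      · exact Or.inl (hge j (by omega) h0)

/-- union of two segments at the same level -/
lemma Seg.union {t : ℚ} {P Q : Polynomial ℚ} {m : ℚ} {x y x' y' : ℕ}
    (hP : Seg t P m x y) (hQ : Seg t Q m x' y') (hlt : y < x') :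
    Seg t (P + Q) m x y' := by
  have hco : ∀ j, (P + Q).coeff j = P.coeff j + Q.coeff j := fun j => Polynomial.coeff_add P Q j
  have key : ∀ j, (P + Q).coeff j ≠ 0 → m ≤ wvv t (P + Q) j := by
    intro j hj
    rw [hco j] at hj
    have := nv_add_ge (x := P.coeff j) (y := Q.coeff j) (m := m - t * j)
      (by rcases eq_or_ne (P.coeff j) 0 with h0 | h0
          · exact Or.inl h0
          · have := hP.above j h0; unfold wvv at this; right; linarith)
      (by rcases eq_or_ne (Q.coeff j) 0 with h0 | h0
          · exact Or.inl h0
          · have := hQ.above j h0; unfold wvv at this; right; linarith)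
    rcases this with h0 | h0
    · exact absurd h0 hj
    · unfold wvv; rw [hco j]; linarith
  have exact : ∀ (A B : Polynomial ℚ) (i : ℕ), A.coeff i ≠ 0 → wvv t A i = m →
      (B.coeff i = 0 ∨ m < wvv t B i) →
      A.coeff i + B.coeff i ≠ 0 ∧ nv (A.coeff i + B.coeff i) + t * i = m := by
    intro A B i h1 e1 hq
    have := nv_add_exact (x := A.coeff i) (y := B.coeff i) (m := m - t * i) h1
      (by unfold wvv at e1; linarith)
      (by rcases hq with h0 | h0
          · exact Or.inl h0
          · unfold wvv at h0; right; linarith)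
    exact ⟨this.1, by rw [this.2]; ring⟩
  have exl := exact P Q x hP.nzx hP.valx (by
    rcases eq_or_ne (Q.coeff x) 0 with h0 | h0
    · exact Or.inl h0
    · have hxy := hP.x_le_y
      exact Or.inr (hQ.sltx x (by omega) h0))
  have exh := exact Q P y' hQ.nzy hQ.valy (by
    rcases eq_or_ne (P.coeff y') 0 with h0 | h0
    · exact Or.inl h0
    · refine Or.inr (hP.sgty y' ?_ h0)
      have := hQ.x_le_y
      omega)
  have strict : ∀ j, (m < wvv t P j ∨ P.coeff j = 0) → (m < wvv t Q j ∨ Q.coeff j = 0) →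
      (P + Q).coeff j ≠ 0 → m < wvv t (P + Q) j := by
    intro j h1 h2 hj
    rw [hco j] at hj
    have := nv_add_gt (x := P.coeff j) (y := Q.coeff j) (m := m - t * j)
      (by rcases h1 with h0 | h0
          · unfold wvv at h0; right; linarith
          · exact Or.inl h0)
      (by rcases h2 with h0 | h0
          · unfold wvv at h0; right; linarith
          · exact Or.inl h0)
    rcases this with h0 | h0
    · exact absurd h0 hj
    · unfold wvv; rw [hco j]; linarith
  constructor
  · exact key
  · rw [hco x]; exact exl.1
  · unfold wvv; rw [hco x]; exact exl.2
  · rw [hco y']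
    rw [add_comm (P.coeff y') (Q.coeff y')]
    exact exh.1
  · unfold wvv
    rw [hco y', add_comm (P.coeff y') (Q.coeff y')]
    exact exh.2
  · intro j hjx hj
    refine strict j ?_ ?_ hj
    · rcases eq_or_ne (P.coeff j) 0 with h0 | h0
      · exact Or.inr h0
      · exact Or.inl (hP.sltx j hjx h0)
    · rcases eq_or_ne (Q.coeff j) 0 with h0 | h0
      · exact Or.inr h0
      · have hxy := hP.x_le_y
        exact Or.inl (hQ.sltx j (by omega) h0)
  · intro j hjy hj
    refine strict j ?_ ?_ hj
    · rcases eq_or_ne (P.coeff j) 0 with h0 | h0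
      · exact Or.inr h0
      · refine Or.inl (hP.sgty j ?_ h0)
        have := hQ.x_le_y
        omega
    · rcases eq_or_ne (Q.coeff j) 0 with h0 | h0
      · exact Or.inr h0
      · exact Or.inl (hQ.sgty j (by omega) h0)

/-- adding a polynomial whose weighted valuations all strictly exceed `m` -/
lemma Seg.add_strict {t : ℚ} {P Q : Polynomial ℚ} {m : ℚ} {x y : ℕ}
    (h : Seg t P m x y)
    (hstrict : ∀ j, Q.coeff j ≠ 0 → m < wvv t Q j) :
    Seg t (P + Q) m x y :=
  h.add_aux (fun j hj => (hstrict j hj).le) (fun j _ => hstrict j) (fun j _ => hstrict j)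
/-- all weighted valuations strictly above `m` -/
lemma strictAll_of_seg {t m m' : ℚ} {Q : Polynomial ℚ} {x y : ℕ}
    (hQ : Seg t Q m' x y) (hm : m < m') : ∀ j, Q.coeff j ≠ 0 → m < wvv t Q j :=
  fun j hj => lt_of_lt_of_le hm (hQ.above j hj)

lemma strictAll_add {t m : ℚ} {P Q : Polynomial ℚ}
    (hP : ∀ j, P.coeff j ≠ 0 → m < wvv t P j) (hQ : ∀ j, Q.coeff j ≠ 0 → m < wvv t Q j) :
    ∀ j, (P + Q).coeff j ≠ 0 → m < wvv t (P + Q) j := by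
  intro j hj
  rw [Polynomial.coeff_add] at hj
  have := nv_add_gt (x := P.coeff j) (y := Q.coeff j) (m := m - t * j)
    (by rcases eq_or_ne (P.coeff j) 0 with h0 | h0
        · exact Or.inl h0
        · have := hP j h0; unfold wvv at this; right; linarith)
    (by rcases eq_or_ne (Q.coeff j) 0 with h0 | h0
        · exact Or.inl h0
        · have := hQ j h0; unfold wvv at this; right; linarith)
  rcases this with h0 | h0
  · exact absurd h0 hj
  · unfold wvv; rw [Polynomial.coeff_add]; linarith

/-- a monic polynomial whose Newton diagram lies strictly above the line through
`(natDegree, 0)` of any slope `-t'` with `t' ≤ 1/((n-2)·natDegree)`. -/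
def GoodBase (n : ℕ) (h : Polynomial ℚ) : Prop :=
  h.Monic ∧ 1 ≤ h.natDegree ∧
  ∀ t' : ℚ, 0 < t' → t' ≤ 1 / (((n : ℚ) - 2) * (h.natDegree : ℚ)) →
    Seg t' h (t' * (h.natDegree : ℚ)) h.natDegree h.natDegree

/-- the three-segment Newton polygon structure of the iterates -/
def NPdata (n : ℕ) (P : Polynomial ℚ) : Prop :=
  P.Monic ∧ ∃ E : ℕ, 1 ≤ E ∧ P.natDegree = 3 * n * E ∧
    Seg (1 / (((n : ℚ) - 2) * E)) P 3 0 ((n - 2) * E) ∧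
    Seg (1 / ((n : ℚ) * E)) P (2 + ((n : ℚ) - 2) / n) ((n - 2) * E) ((2 * n - 2) * E) ∧
    Seg (1 / (((n : ℚ) + 2) * E)) P (3 * (n : ℚ) / ((n : ℚ) + 2)) ((2 * n - 2) * E) (3 * n * E)

lemma goodBase_X (n : ℕ) : GoodBase n Polynomial.X := by
  refine ⟨Polynomial.monic_X, by simp, ?_⟩
  intro t' ht' _
  have := seg_X (t := t')
  simpa using this

lemma NPdata.goodBase {n : ℕ} (hn : 3 ≤ n) {P : Polynomial ℚ} (h : NPdata n P) :
    GoodBase n P := by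
  obtain ⟨hmon, E, hE, hdeg, _, _, hseg3⟩ := h
  have hnq : (3 : ℚ) ≤ (n : ℚ) := by exact_mod_cast hn
  have hEq : (1 : ℚ) ≤ (E : ℚ) := by exact_mod_cast hE
  have hEpos : (0 : ℚ) < (E : ℚ) := by linarith
  refine ⟨hmon, by rw [hdeg]; exact Nat.mul_pos (Nat.mul_pos (by omega) (by omega)) (by omega), ?_⟩
  intro t' ht'pos ht'le
  have hDq : ((P.natDegree : ℚ)) = 3 * (n : ℚ) * (E : ℚ) := by
    rw [hdeg]; push_cast; ring
  have hDpos : (0 : ℚ) < (P.natDegree : ℚ) := by rw [hDq]; positivity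
  -- t3 where t3 = 1/((n+2)E)
  set t3 : ℚ := 1 / (((n : ℚ) + 2) * E) with ht3
  have ht3pos : 0 < t3 := by rw [ht3]; positivity
  -- m3 = t3 * D
  have hm3 : 3 * (n : ℚ) / ((n : ℚ) + 2) = t3 * P.natDegree := by
    rw [ht3, hDq]; field_simp
  -- t' < t3
  have htlt : t' < t3 := by
    refine lt_of_le_of_lt ht'le ?_
    rw [ht3, hDq]
    rw [div_lt_div_iff₀ (by nlinarith) (by positivity)]
    nlinarith
  -- the bound : for each j with nonzero coeff, nv + t3 * j ≥ t3 * D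
  have hbound : ∀ j, P.coeff j ≠ 0 → t3 * P.natDegree ≤ nv (P.coeff j) + t3 * j := by
    intro j hj
    have := hseg3.above j hj
    unfold wvv at this
    rw [hm3] at this
    exact this
  have hnz : P.coeff P.natDegree ≠ 0 := by
    rw [Polynomial.coeff_natDegree, hmon.leadingCoeff]
    exact one_ne_zero
  have hval : wvv t' P P.natDegree = t' * P.natDegree := by
    unfold wvv
    rw [Polynomial.coeff_natDegree, hmon.leadingCoeff, nv_one, zero_add]
  constructor
  · intro j hj
    have h1 := hbound j hj
    have hjD : (j : ℚ) ≤ P.natDegree := by exact_mod_cast Polynomial.le_natDegree_of_ne_zero hj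
    unfold wvv
    nlinarith [htlt.le]
  · exact hnz
  · exact hval
  · exact hnz
  · exact hval
  · intro j hjD hj
    have h1 := hbound j hj
    have hjD' : (j : ℚ) < P.natDegree := by exact_mod_cast hjD
    unfold wvv
    nlinarith [htlt]
  · intro j hjD hj
    exact absurd (Polynomial.coeff_eq_zero_of_natDegree_lt hjD) hj
set_option maxHeartbeats 2000000 in
/-- the key inductive step -/
lemma step_NPdata {n : ℕ} (hn : 3 ≤ n) {aa bb cc : ℚ}
    (haa : aa ≠ 0) (hbb : bb ≠ 0) (hcc : cc ≠ 0)
    (h2a : nv aa = 1) (h4b : nv bb = 2) (h8c : nv cc = 3)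
    {h : Polynomial ℚ} (hgb : GoodBase n h) :
    NPdata n (h ^ (3 * n) + Polynomial.C aa * h ^ (2 * n - 2) +
      Polynomial.C bb * h ^ (n - 2) + Polynomial.C cc) := by
  classical
  obtain ⟨hmon, hE1, hseg⟩ := hgb
  set E := h.natDegree with hEdef
  set G := h ^ (3 * n) + Polynomial.C aa * h ^ (2 * n - 2) +
      Polynomial.C bb * h ^ (n - 2) + Polynomial.C cc with hGdef
  have hnq : (3 : ℚ) ≤ (n : ℚ) := by exact_mod_cast hn
  have hEq : (1 : ℚ) ≤ (E : ℚ) := by exact_mod_cast hE1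
  have hn2 : (0 : ℚ) < (n : ℚ) - 2 := by linarith
  have hn0 : (0 : ℚ) < (n : ℚ) := by linarith
  have hnp2 : (0 : ℚ) < (n : ℚ) + 2 := by linarith
  have hEpos : (0 : ℚ) < (E : ℚ) := by linarith
  have hc1 : ((n - 2 : ℕ) : ℚ) = (n : ℚ) - 2 := by
    have := Nat.cast_sub (R := ℚ) (by omega : 2 ≤ n); simpa using this
  have hc2 : ((2 * n - 2 : ℕ) : ℚ) = 2 * (n : ℚ) - 2 := by
    have := Nat.cast_sub (R := ℚ) (by omega : 2 ≤ 2 * n); push_cast at this ⊢; linarith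
  have hc3 : ((3 * n : ℕ) : ℚ) = 3 * (n : ℚ) := by push_cast; ring
  have hEub : 0 < E := hE1
  -- ===================== segment 1 =====================
  set t1 : ℚ := 1 / (((n : ℚ) - 2) * E) with ht1def
  have ht1pos : 0 < t1 := by rw [ht1def]; positivity
  have hseg1 : Seg t1 h (t1 * E) E E := hseg t1 ht1pos le_rfl
  have ht1E : t1 * E = 1 / ((n : ℚ) - 2) := by rw [ht1def]; field_simp; try ring
  have hA1 : Seg t1 (h ^ (3 * n)) (3 * (n : ℚ) / ((n : ℚ) - 2)) (3 * n * E) (3 * n * E) := by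
    have h0 := seg_pow hseg1 (3 * n)
    rw [ht1E, hc3, mul_one_div] at h0
    exact h0
  have hA2 : Seg t1 (Polynomial.C aa * h ^ (2 * n - 2))
      (1 + (2 * (n : ℚ) - 2) / ((n : ℚ) - 2)) ((2 * n - 2) * E) ((2 * n - 2) * E) := by
    have h0 := seg_mul (seg_C haa) (seg_pow hseg1 (2 * n - 2))
    rw [h2a, ht1E, hc2, mul_one_div] at h0
    simpa using h0
  have hA3 : Seg t1 (Polynomial.C bb * h ^ (n - 2)) 3 ((n - 2) * E) ((n - 2) * E) := by
    have h0 := seg_mul (seg_C hbb) (seg_pow hseg1 (n - 2))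
    rw [h4b, ht1E, hc1, mul_one_div] at h0
    have e : (2 : ℚ) + ((n : ℚ) - 2) / ((n : ℚ) - 2) = 3 := by
      rw [div_self (ne_of_gt hn2)]; norm_num
    rw [e] at h0
    simpa using h0
  have hA4 : Seg t1 (Polynomial.C cc) 3 0 0 := by
    have h0 := seg_C (t := t1) hcc
    rw [h8c] at h0
    exact h0
  have hb1 : Seg t1 (Polynomial.C cc + Polynomial.C bb * h ^ (n - 2)) 3 0 ((n - 2) * E) :=
    Seg.union hA4 hA3 (Nat.mul_pos (by omega) hEub)
  have s1 : ∀ j, (h ^ (3 * n)).coeff j ≠ 0 → (3 : ℚ) < wvv t1 (h ^ (3 * n)) j := by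
    refine strictAll_of_seg hA1 ?_
    rw [lt_div_iff₀ hn2]; linarith
  have s2 : ∀ j, (Polynomial.C aa * h ^ (2 * n - 2)).coeff j ≠ 0 →
      (3 : ℚ) < wvv t1 (Polynomial.C aa * h ^ (2 * n - 2)) j := by
    refine strictAll_of_seg hA2 ?_
    rw [show (3 : ℚ) = 1 + 2 by norm_num, add_lt_add_iff_left, lt_div_iff₀ hn2]; linarith
  have hseg1G : Seg t1 G 3 0 ((n - 2) * E) := by
    have h0 := hb1.add_strict (strictAll_add s1 s2)
    have hre : Polynomial.C cc + Polynomial.C bb * h ^ (n - 2) +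
        (h ^ (3 * n) + Polynomial.C aa * h ^ (2 * n - 2)) = G := by
      rw [hGdef]; ring
    rw [hre] at h0
    exact h0
  -- ===================== segment 2 =====================
  set t2 : ℚ := 1 / ((n : ℚ) * E) with ht2def
  have ht2pos : 0 < t2 := by rw [ht2def]; positivity
  have hseg2 : Seg t2 h (t2 * E) E E := by
    refine hseg t2 ht2pos ?_
    rw [ht2def]
    apply div_le_div_of_nonneg_left (by norm_num) (by positivity)
    nlinarith
  have ht2E : t2 * E = 1 / (n : ℚ) := by rw [ht2def]; field_simp; try ring
  have hB1 : Seg t2 (h ^ (3 * n)) 3 (3 * n * E) (3 * n * E) := by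
    have h0 := seg_pow hseg2 (3 * n)
    rw [ht2E, hc3, mul_one_div] at h0
    have e : 3 * (n : ℚ) / (n : ℚ) = 3 := by field_simp
    rw [e] at h0
    exact h0
  have hB2 : Seg t2 (Polynomial.C aa * h ^ (2 * n - 2))
      (2 + ((n : ℚ) - 2) / (n : ℚ)) ((2 * n - 2) * E) ((2 * n - 2) * E) := by
    have h0 := seg_mul (seg_C haa) (seg_pow hseg2 (2 * n - 2))
    rw [h2a, ht2E, hc2, mul_one_div] at h0
    have e : (1 : ℚ) + (2 * (n : ℚ) - 2) / (n : ℚ) = 2 + ((n : ℚ) - 2) / (n : ℚ) := by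
      field_simp; ring
    rw [e] at h0
    simpa using h0
  have hB3 : Seg t2 (Polynomial.C bb * h ^ (n - 2))
      (2 + ((n : ℚ) - 2) / (n : ℚ)) ((n - 2) * E) ((n - 2) * E) := by
    have h0 := seg_mul (seg_C hbb) (seg_pow hseg2 (n - 2))
    rw [h4b, ht2E, hc1, mul_one_div] at h0
    simpa using h0
  have hB4 : Seg t2 (Polynomial.C cc) 3 0 0 := by
    have h0 := seg_C (t := t2) hcc
    rw [h8c] at h0
    exact h0
  have hm2lt3 : 2 + ((n : ℚ) - 2) / (n : ℚ) < 3 := by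
    rw [show (3 : ℚ) = 2 + 1 by norm_num, add_lt_add_iff_left, div_lt_one hn0]; linarith
  have hb2 : Seg t2 (Polynomial.C bb * h ^ (n - 2) + Polynomial.C aa * h ^ (2 * n - 2))
      (2 + ((n : ℚ) - 2) / (n : ℚ)) ((n - 2) * E) ((2 * n - 2) * E) :=
    Seg.union hB3 hB2 (mul_lt_mul_of_pos_right (by omega) hEub)
  have s3 : ∀ j, (h ^ (3 * n)).coeff j ≠ 0 →
      2 + ((n : ℚ) - 2) / (n : ℚ) < wvv t2 (h ^ (3 * n)) j :=
    strictAll_of_seg hB1 hm2lt3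
  have s4 : ∀ j, (Polynomial.C cc).coeff j ≠ 0 →
      2 + ((n : ℚ) - 2) / (n : ℚ) < wvv t2 (Polynomial.C cc) j :=
    strictAll_of_seg hB4 hm2lt3
  have hseg2G : Seg t2 G (2 + ((n : ℚ) - 2) / (n : ℚ)) ((n - 2) * E) ((2 * n - 2) * E) := by
    have h0 := hb2.add_strict (strictAll_add s3 s4)
    have hre : Polynomial.C bb * h ^ (n - 2) + Polynomial.C aa * h ^ (2 * n - 2) +
        (h ^ (3 * n) + Polynomial.C cc) = G := by
      rw [hGdef]; ring
    rw [hre] at h0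
    exact h0
  -- ===================== segment 3 =====================
  set t3 : ℚ := 1 / (((n : ℚ) + 2) * E) with ht3def
  have ht3pos : 0 < t3 := by rw [ht3def]; positivity
  have hseg3 : Seg t3 h (t3 * E) E E := by
    refine hseg t3 ht3pos ?_
    rw [ht3def]
    apply div_le_div_of_nonneg_left (by norm_num) (by positivity)
    nlinarith
  have ht3E : t3 * E = 1 / ((n : ℚ) + 2) := by rw [ht3def]; field_simp; try ring
  have hC1 : Seg t3 (h ^ (3 * n)) (3 * (n : ℚ) / ((n : ℚ) + 2)) (3 * n * E) (3 * n * E) := by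
    have h0 := seg_pow hseg3 (3 * n)
    rw [ht3E, hc3, mul_one_div] at h0
    exact h0
  have hC2 : Seg t3 (Polynomial.C aa * h ^ (2 * n - 2))
      (3 * (n : ℚ) / ((n : ℚ) + 2)) ((2 * n - 2) * E) ((2 * n - 2) * E) := by
    have h0 := seg_mul (seg_C haa) (seg_pow hseg3 (2 * n - 2))
    rw [h2a, ht3E, hc2, mul_one_div] at h0
    have e : (1 : ℚ) + (2 * (n : ℚ) - 2) / ((n : ℚ) + 2) = 3 * (n : ℚ) / ((n : ℚ) + 2) := by
      field_simp; ring
    rw [e] at h0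
    simpa using h0
  have hC3 : Seg t3 (Polynomial.C bb * h ^ (n - 2))
      (2 + ((n : ℚ) - 2) / ((n : ℚ) + 2)) ((n - 2) * E) ((n - 2) * E) := by
    have h0 := seg_mul (seg_C hbb) (seg_pow hseg3 (n - 2))
    rw [h4b, ht3E, hc1, mul_one_div] at h0
    simpa using h0
  have hC4 : Seg t3 (Polynomial.C cc) 3 0 0 := by
    have h0 := seg_C (t := t3) hcc
    rw [h8c] at h0
    exact h0
  have hm3lt : 3 * (n : ℚ) / ((n : ℚ) + 2) < 2 + ((n : ℚ) - 2) / ((n : ℚ) + 2) := by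
    have e : 2 + ((n : ℚ) - 2) / ((n : ℚ) + 2) = (3 * (n : ℚ) + 2) / ((n : ℚ) + 2) := by
      field_simp; ring
    rw [e, div_lt_div_iff₀ hnp2 hnp2]
    nlinarith
  have hm3lt3 : 3 * (n : ℚ) / ((n : ℚ) + 2) < 3 := by
    rw [div_lt_iff₀ hnp2]; linarith
  have hb3 : Seg t3 (Polynomial.C aa * h ^ (2 * n - 2) + h ^ (3 * n))
      (3 * (n : ℚ) / ((n : ℚ) + 2)) ((2 * n - 2) * E) (3 * n * E) :=
    Seg.union hC2 hC1 (mul_lt_mul_of_pos_right (by omega) hEub)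
  have s5 : ∀ j, (Polynomial.C bb * h ^ (n - 2)).coeff j ≠ 0 →
      3 * (n : ℚ) / ((n : ℚ) + 2) < wvv t3 (Polynomial.C bb * h ^ (n - 2)) j :=
    strictAll_of_seg hC3 hm3lt
  have s6 : ∀ j, (Polynomial.C cc).coeff j ≠ 0 →
      3 * (n : ℚ) / ((n : ℚ) + 2) < wvv t3 (Polynomial.C cc) j :=
    strictAll_of_seg hC4 hm3lt3
  have hseg3G : Seg t3 G (3 * (n : ℚ) / ((n : ℚ) + 2)) ((2 * n - 2) * E) (3 * n * E) := by
    have h0 := hb3.add_strict (strictAll_add s5 s6)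
    have hre : Polynomial.C aa * h ^ (2 * n - 2) + h ^ (3 * n) +
        (Polynomial.C bb * h ^ (n - 2) + Polynomial.C cc) = G := by
      rw [hGdef]; ring
    rw [hre] at h0
    exact h0
  -- ===================== monicity and degree =====================
  have hdeg1 : (h ^ (3 * n)).natDegree = 3 * n * E := by
    rw [hmon.natDegree_pow]
  have hRdeg : (Polynomial.C aa * h ^ (2 * n - 2) + Polynomial.C bb * h ^ (n - 2) +
      Polynomial.C cc).natDegree < (h ^ (3 * n)).natDegree := by
    rw [hdeg1]
    have hd2 : (Polynomial.C aa * h ^ (2 * n - 2)).natDegree ≤ (2 * n - 2) * E :=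
      le_trans (Polynomial.natDegree_C_mul_le _ _) (le_of_eq (hmon.natDegree_pow _))
    have hd3 : (Polynomial.C bb * h ^ (n - 2)).natDegree ≤ (n - 2) * E :=
      le_trans (Polynomial.natDegree_C_mul_le _ _) (le_of_eq (hmon.natDegree_pow _))
    have hd4 : (Polynomial.C cc).natDegree = 0 := Polynomial.natDegree_C _
    have hq : (2 * n - 2) * E < 3 * n * E := mul_lt_mul_of_pos_right (by omega) hEub
    have hq2 : (n - 2) * E < 3 * n * E := mul_lt_mul_of_pos_right (by omega) hEub
    apply lt_of_le_of_lt (Polynomial.natDegree_add_le _ _)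
    apply max_lt
    · exact lt_of_le_of_lt (Polynomial.natDegree_add_le _ _)
        (max_lt (lt_of_le_of_lt hd2 hq) (lt_of_le_of_lt hd3 hq2))
    · rw [hd4]
      exact Nat.mul_pos (Nat.mul_pos (by omega) (by omega)) hEub
  have hGre2 : G = h ^ (3 * n) + (Polynomial.C aa * h ^ (2 * n - 2) +
      Polynomial.C bb * h ^ (n - 2) + Polynomial.C cc) := by rw [hGdef]; ring
  have hdegG : G.natDegree = 3 * n * E := by
    rw [hGre2, Polynomial.natDegree_add_eq_left_of_natDegree_lt hRdeg, hdeg1]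
  have hmonG : G.Monic := by
    unfold Polynomial.Monic Polynomial.leadingCoeff
    rw [hGre2, Polynomial.natDegree_add_eq_left_of_natDegree_lt hRdeg,
      Polynomial.coeff_add, Polynomial.coeff_eq_zero_of_natDegree_lt hRdeg, add_zero]
    exact (hmon.pow _).coeff_natDegree
  exact ⟨hmonG, E, hE1, hdegG, hseg1G, hseg2G, hseg3G⟩
noncomputable def segm (t : ℚ) (P : Polynomial ℚ) : ℚ :=
  if h : P = 0 then 0 else (exists_seg t h).choose

noncomputable def iMin (t : ℚ) (P : Polynomial ℚ) : ℕ :=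
  if h : P = 0 then 0 else (exists_seg t h).choose_spec.choose

noncomputable def iMax (t : ℚ) (P : Polynomial ℚ) : ℕ :=
  if h : P = 0 then 0 else (exists_seg t h).choose_spec.choose_spec.choose

lemma seg_spec (t : ℚ) {P : Polynomial ℚ} (hP : P ≠ 0) :
    Seg t P (segm t P) (iMin t P) (iMax t P) := by
  unfold segm iMin iMax
  rw [dif_neg hP, dif_neg hP, dif_neg hP]
  exact (exists_seg t hP).choose_spec.choose_spec.choose_spec

lemma seg_eqs {t : ℚ} {P : Polynomial ℚ} {m : ℚ} {x y : ℕ} (hs : Seg t P m x y) :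
    segm t P = m ∧ iMin t P = x ∧ iMax t P = y :=
  (seg_spec t hs.ne_zero).unique hs

lemma iMinMax_mul {t : ℚ} {P Q : Polynomial ℚ} (hP : P ≠ 0) (hQ : Q ≠ 0) :
    iMin t (P * Q) = iMin t P + iMin t Q ∧ iMax t (P * Q) = iMax t P + iMax t Q := by
  have h := seg_mul (seg_spec t hP) (seg_spec t hQ)
  exact ⟨(seg_eqs h).2.1, (seg_eqs h).2.2⟩

lemma prod_ne_zero' {S : Multiset (Polynomial ℚ)} (h : (0 : Polynomial ℚ) ∉ S) :
    S.prod ≠ 0 := by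
  induction S using Multiset.induction_on with
  | empty => simp
  | cons a s ih =>
    rw [Multiset.prod_cons]
    refine mul_ne_zero ?_ (ih fun hs => h (Multiset.mem_cons_of_mem hs))
    intro h0
    exact h (h0 ▸ Multiset.mem_cons_self a s)

lemma iMinMax_prod (t : ℚ) {S : Multiset (Polynomial ℚ)} (h : (0 : Polynomial ℚ) ∉ S) :
    iMin t S.prod = (S.map (iMin t)).sum ∧ iMax t S.prod = (S.map (iMax t)).sum := by
  induction S using Multiset.induction_on with
  | empty =>
    simp only [Multiset.prod_zero, Multiset.map_zero, Multiset.sum_zero]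
    exact ⟨(seg_eqs (seg_one (t := t))).2.1, (seg_eqs (seg_one (t := t))).2.2⟩
  | cons a s ih =>
    have ha : a ≠ 0 := fun h0 => h (h0 ▸ Multiset.mem_cons_self a s)
    have hs0 : (0 : Polynomial ℚ) ∉ s := fun hs => h (Multiset.mem_cons_of_mem hs)
    have ihs := ih hs0
    rw [Multiset.prod_cons, Multiset.map_cons, Multiset.map_cons, Multiset.sum_cons,
      Multiset.sum_cons]
    have := iMinMax_mul (t := t) ha (prod_ne_zero' hs0)
    rw [this.1, this.2, ihs.1, ihs.2]
    exact ⟨rfl, rfl⟩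

lemma multiset_squeeze {α : Type*} {S : Multiset α} {f g : α → ℕ}
    (hle : ∀ x ∈ S, f x ≤ g x) (hsum : (S.map f).sum = (S.map g).sum) :
    ∀ x ∈ S, f x = g x := by
  induction S using Multiset.induction_on with
  | empty => simp
  | cons a s ih =>
    rw [Multiset.map_cons, Multiset.map_cons, Multiset.sum_cons, Multiset.sum_cons] at hsum
    have hsle : (s.map f).sum ≤ (s.map g).sum := by
      apply Multiset.sum_map_le_sum_map
      intro x hx
      exact hle x (Multiset.mem_cons_of_mem hx)
    have hfa : f a ≤ g a := hle a (Multiset.mem_cons_self a s)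
    have heq : f a = g a ∧ (s.map f).sum = (s.map g).sum := by omega
    intro x hx
    rcases Multiset.mem_cons.mp hx with rfl | hx
    · exact heq.1
    · exact ih (fun y hy => hle y (Multiset.mem_cons_of_mem hy)) heq.2 x hx

lemma multiset_sub_sum {α : Type*} {S : Multiset α} {f g : α → ℕ}
    (hle : ∀ x ∈ S, g x ≤ f x) :
    (S.map (fun x => f x - g x)).sum = (S.map f).sum - (S.map g).sum ∧
      (S.map g).sum ≤ (S.map f).sum := by
  induction S using Multiset.induction_on with
  | empty => simp
  | cons a s ih =>
    have ihs := ih (fun y hy => hle y (Multiset.mem_cons_of_mem hy))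
    have hfa : g a ≤ f a := hle a (Multiset.mem_cons_self a s)
    simp only [Multiset.map_cons, Multiset.sum_cons]
    omega

lemma ind_le_one {α : Type*} {S : Multiset α} {f : α → ℕ} {L : ℕ} (hL : 0 < L)
    (hd : ∀ x ∈ S, f x = 0 ∨ L ≤ f x) (hsum : (S.map f).sum ≤ L) :
    (S.map (fun x => if f x = 0 then 0 else 1)).sum ≤ 1 := by
  induction S using Multiset.induction_on with
  | empty => simp
  | cons a s ih =>
    simp only [Multiset.map_cons, Multiset.sum_cons] at hsum ⊢
    by_cases h0 : f a = 0
    · rw [if_pos h0]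
      rw [h0] at hsum
      simpa using ih (fun y hy => hd y (Multiset.mem_cons_of_mem hy)) (by omega)
    · rw [if_neg h0]
      have hfa : L ≤ f a := (hd a (Multiset.mem_cons_self a s)).resolve_left h0
      have hrest : (s.map f).sum = 0 := by omega
      have hz : ∀ x ∈ s, f x = 0 := by
        intro x hx
        have : f x ∈ s.map f := Multiset.mem_map_of_mem f hx
        exact Multiset.sum_eq_zero_iff.mp hrest _ this
      have : (s.map (fun x => if f x = 0 then 0 else 1)).sum = 0 := by
        apply Multiset.sum_eq_zero
        intro z hz2
        obtain ⟨x, hx, rfl⟩ := Multiset.mem_map.mp hz2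
        rw [if_pos (hz x hx)]
      omega

lemma card_le_three {α : Type*} {S : Multiset α} {f1 f2 f3 : α → ℕ} {L1 L2 L3 : ℕ}
    (hL1 : 0 < L1) (hL2 : 0 < L2) (hL3 : 0 < L3)
    (hd1 : ∀ x ∈ S, f1 x = 0 ∨ L1 ≤ f1 x)
    (hd2 : ∀ x ∈ S, f2 x = 0 ∨ L2 ≤ f2 x)
    (hd3 : ∀ x ∈ S, f3 x = 0 ∨ L3 ≤ f3 x)
    (hs1 : (S.map f1).sum ≤ L1) (hs2 : (S.map f2).sum ≤ L2) (hs3 : (S.map f3).sum ≤ L3)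
    (hpos : ∀ x ∈ S, 0 < f1 x + f2 x + f3 x) :
    Multiset.card S ≤ 3 := by
  have key : Multiset.card S ≤
      (S.map (fun x => if f1 x = 0 then 0 else 1)).sum +
      (S.map (fun x => if f2 x = 0 then 0 else 1)).sum +
      (S.map (fun x => if f3 x = 0 then 0 else 1)).sum := by
    induction S using Multiset.induction_on with
    | empty => simp
    | cons a s ih =>
      have ihs := ih (fun y hy => hd1 y (Multiset.mem_cons_of_mem hy))
        (fun y hy => hd2 y (Multiset.mem_cons_of_mem hy))
        (fun y hy => hd3 y (Multiset.mem_cons_of_mem hy))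
        (le_trans (by simp only [Multiset.map_cons, Multiset.sum_cons]; omega) hs1)
        (le_trans (by simp only [Multiset.map_cons, Multiset.sum_cons]; omega) hs2)
        (le_trans (by simp only [Multiset.map_cons, Multiset.sum_cons]; omega) hs3)
        (fun y hy => hpos y (Multiset.mem_cons_of_mem hy))
      have hap := hpos a (Multiset.mem_cons_self a s)
      simp only [Multiset.map_cons, Multiset.sum_cons, Multiset.card_cons]
      have : (1 : ℕ) ≤ (if f1 a = 0 then 0 else 1) + (if f2 a = 0 then 0 else 1) +
          (if f3 a = 0 then 0 else 1) := by
        by_cases h1 : f1 a = 0 <;> by_cases h2 : f2 a = 0 <;> by_cases h3 : f3 a = 0 <;>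
          simp_all <;> omega
      omega
  have b1 := ind_le_one hL1 hd1 hs1
  have b2 := ind_le_one hL2 hd2 hs2
  have b3 := ind_le_one hL3 hd3 hs3
  omega
lemma NP_count {n : ℕ} (hn : 3 ≤ n) {P : Polynomial ℚ} (h : NPdata n P) :
    numFactors P ≤ 3 := by
  classical
  obtain ⟨hmon, E, hE, hdeg, hs1, hs2, hs3⟩ := h
  have hP0 : P ≠ 0 := hmon.ne_zero
  have hnq : (3 : ℚ) ≤ (n : ℚ) := by exact_mod_cast hn
  have hEq : (1 : ℚ) ≤ (E : ℚ) := by exact_mod_cast hE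
  have hn2 : (0 : ℚ) < (n : ℚ) - 2 := by linarith
  have hn0 : (0 : ℚ) < (n : ℚ) := by linarith
  have hnp2 : (0 : ℚ) < (n : ℚ) + 2 := by linarith
  have hEpos : (0 : ℚ) < (E : ℚ) := by linarith
  have hcc1 : (((n - 2) * E : ℕ) : ℚ) = ((n : ℚ) - 2) * E := by
    have := Nat.cast_sub (R := ℚ) (by omega : 2 ≤ n)
    push_cast
    rw [this]
    push_cast
    ring
  have hcc2 : ((n * E : ℕ) : ℚ) = (n : ℚ) * E := by push_cast; ring
  have hcc3 : (((n + 2) * E : ℕ) : ℚ) = ((n : ℚ) + 2) * E := by push_cast; ring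
  set t1 : ℚ := 1 / (((n : ℚ) - 2) * E) with ht1
  set t2 : ℚ := 1 / ((n : ℚ) * E) with ht2
  set t3 : ℚ := 1 / (((n : ℚ) + 2) * E) with ht3
  have ht21 : t2 < t1 := by
    rw [ht1, ht2, div_lt_div_iff₀ (by positivity) (by positivity)]
    nlinarith
  have ht32 : t3 < t2 := by
    rw [ht2, ht3, div_lt_div_iff₀ (by positivity) (by positivity)]
    nlinarith
  set F := UniqueFactorizationMonoid.factors P with hF
  have hirr : ∀ Q ∈ F, Irreducible Q := fun Q hQ =>
    UniqueFactorizationMonoid.irreducible_of_factor Q hQ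
  have h0F : (0 : Polynomial ℚ) ∉ F := fun h0 => not_irreducible_zero (hirr 0 h0)
  have hQ0 : ∀ Q ∈ F, Q ≠ 0 := fun Q hQ h0 => h0F (h0 ▸ hQ)
  obtain ⟨u, hu⟩ := (UniqueFactorizationMonoid.factors_prod hP0)
  obtain ⟨r, hrunit, hCr⟩ := Polynomial.isUnit_iff.mp u.isUnit
  have hr0 : r ≠ 0 := hrunit.ne_zero
  have hprod0 : F.prod ≠ 0 := prod_ne_zero' h0F
  have hP : F.prod * Polynomial.C r = P := by rw [hCr]; exact hu
  have hCmin : ∀ t : ℚ, iMin t (Polynomial.C r) = 0 ∧ iMax t (Polynomial.C r) = 0 :=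
    fun t => ⟨(seg_eqs (seg_C hr0)).2.1, (seg_eqs (seg_C hr0)).2.2⟩
  have hsum : ∀ t : ℚ, (F.map (iMin t)).sum = iMin t P ∧ (F.map (iMax t)).sum = iMax t P := by
    intro t
    have h1 := iMinMax_prod t h0F
    have h2 := iMinMax_mul (t := t) hprod0 (Polynomial.C_ne_zero.mpr hr0)
    rw [hP] at h2
    have h3 := (hCmin t).1
    have h4 := (hCmin t).2
    have h5 := h1.1
    have h6 := h1.2
    have h7 := h2.1
    have h8 := h2.2
    constructor <;> omega
  have hP1 := seg_eqs hs1
  have hP2 := seg_eqs hs2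
  have hP3 := seg_eqs hs3
  have hmono12 : ∀ Q ∈ F, iMax t1 Q ≤ iMin t2 Q := fun Q hQ =>
    seg_mono (seg_spec t1 (hQ0 Q hQ)) (seg_spec t2 (hQ0 Q hQ)) ht21
  have hmono23 : ∀ Q ∈ F, iMax t2 Q ≤ iMin t3 Q := fun Q hQ =>
    seg_mono (seg_spec t2 (hQ0 Q hQ)) (seg_spec t3 (hQ0 Q hQ)) ht32
  have heq12 : ∀ Q ∈ F, iMax t1 Q = iMin t2 Q := by
    apply multiset_squeeze hmono12
    rw [(hsum t1).2, (hsum t2).1, hP1.2.2, hP2.2.1]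
  have heq23 : ∀ Q ∈ F, iMax t2 Q = iMin t3 Q := by
    apply multiset_squeeze hmono23
    rw [(hsum t2).2, (hsum t3).1, hP2.2.2, hP3.2.1]
  have heq0 : ∀ Q ∈ F, iMin t1 Q = 0 := by
    intro Q hQ
    have h0 : (F.map (iMin t1)).sum = 0 := by rw [(hsum t1).1, hP1.2.1]
    exact Multiset.sum_eq_zero_iff.mp h0 _ (Multiset.mem_map_of_mem _ hQ)
  have heqdeg : ∀ Q ∈ F, iMax t3 Q = Q.natDegree := by
    apply multiset_squeeze (fun Q hQ => (seg_spec t3 (hQ0 Q hQ)).y_le_natDegree)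
    rw [(hsum t3).2, hP3.2.2]
    have hdegF : (F.map Polynomial.natDegree).sum = F.prod.natDegree :=
      (Polynomial.natDegree_multiset_prod F h0F).symm
    rw [hdegF]
    have hPdeg : F.prod.natDegree = P.natDegree := by
      rw [← hP, Polynomial.natDegree_mul hprod0 (Polynomial.C_ne_zero.mpr hr0),
        Polynomial.natDegree_C, add_zero]
    rw [hPdeg, hdeg]
  have hminmax : ∀ (t : ℚ), ∀ Q ∈ F, iMin t Q ≤ iMax t Q := fun t Q hQ =>
    (seg_spec t (hQ0 Q hQ)).x_le_y
  -- divisibility of segment lengths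
  have hdvd : ∀ (t : ℚ) (L : ℕ), t = 1 / (L : ℚ) → 0 < L →
      ∀ Q ∈ F, iMax t Q - iMin t Q = 0 ∨ L ≤ iMax t Q - iMin t Q := by
    intro t L htq hL Q hQ
    obtain ⟨z, hz⟩ := seg_int (seg_spec t (hQ0 Q hQ))
    have hL0 : ((L : ℚ)) ≠ 0 := by exact_mod_cast hL.ne'
    have hxy := hminmax t Q hQ
    have hsub : ((iMax t Q - iMin t Q : ℕ) : ℚ) = (z : ℚ) * L := by
      rw [Nat.cast_sub hxy]
      have : t * (L : ℚ) = 1 := by rw [htq]; field_simp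
      have h2 : (t * (iMax t Q : ℚ) - t * (iMin t Q : ℚ)) * (L : ℚ) = (z : ℚ) * L := by
        rw [hz]
      calc ((iMax t Q : ℚ)) - (iMin t Q : ℚ)
          = (t * (iMax t Q : ℚ) - t * (iMin t Q : ℚ)) * (L : ℚ) := by
            rw [sub_mul]
            rw [mul_comm t ((iMax t Q : ℚ)), mul_comm t ((iMin t Q : ℚ))]
            rw [mul_assoc, mul_assoc, this, mul_one, mul_one]
        _ = (z : ℚ) * L := h2
    have hdint : ((iMax t Q - iMin t Q : ℕ) : ℤ) = z * L := by exact_mod_cast hsub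
    have : (L : ℤ) ∣ ((iMax t Q - iMin t Q : ℕ) : ℤ) := ⟨z, by rw [hdint]; ring⟩
    have hdn : L ∣ (iMax t Q - iMin t Q) := by exact_mod_cast this
    rcases Nat.eq_zero_or_pos (iMax t Q - iMin t Q) with h0 | hpos
    · exact Or.inl h0
    · exact Or.inr (Nat.le_of_dvd hpos hdn)
  have hd1 := hdvd t1 ((n - 2) * E) (by rw [ht1, hcc1]) (Nat.mul_pos (by omega) (by omega))
  have hd2 := hdvd t2 (n * E) (by rw [ht2, hcc2]) (Nat.mul_pos (by omega) (by omega))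
  have hd3 := hdvd t3 ((n + 2) * E) (by rw [ht3, hcc3]) (Nat.mul_pos (by omega) (by omega))
  -- sums of lengths
  have hsub1 := multiset_sub_sum (S := F) (f := iMax t1) (g := iMin t1) (hminmax t1)
  have hsub2 := multiset_sub_sum (S := F) (f := iMax t2) (g := iMin t2) (hminmax t2)
  have hsub3 := multiset_sub_sum (S := F) (f := iMax t3) (g := iMin t3) (hminmax t3)
  have hsl1 : (F.map (fun Q => iMax t1 Q - iMin t1 Q)).sum = (n - 2) * E := by
    rw [hsub1.1, (hsum t1).1, (hsum t1).2, hP1.2.1, hP1.2.2]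
    omega
  have hsl2 : (F.map (fun Q => iMax t2 Q - iMin t2 Q)).sum = n * E := by
    rw [hsub2.1, (hsum t2).1, (hsum t2).2, hP2.2.1, hP2.2.2]
    have e : (2 * n - 2) * E = n * E + (n - 2) * E := by
      rw [← add_mul]; congr 1; omega
    omega
  have hsl3 : (F.map (fun Q => iMax t3 Q - iMin t3 Q)).sum = (n + 2) * E := by
    rw [hsub3.1, (hsum t3).1, (hsum t3).2, hP3.2.1, hP3.2.2]
    have e : 3 * n * E = (n + 2) * E + (2 * n - 2) * E := by
      rw [← add_mul]; congr 1; omega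
    omega
  -- positivity of total length per factor
  have hpos : ∀ Q ∈ F, 0 < (iMax t1 Q - iMin t1 Q) + (iMax t2 Q - iMin t2 Q) +
      (iMax t3 Q - iMin t3 Q) := by
    intro Q hQ
    have h0 := heq0 Q hQ
    have h12 := heq12 Q hQ
    have h23 := heq23 Q hQ
    have hdQ := heqdeg Q hQ
    have hm1 := hminmax t1 Q hQ
    have hm2 := hminmax t2 Q hQ
    have hm3 := hminmax t3 Q hQ
    have hdp : 0 < Q.natDegree := (hirr Q hQ).natDegree_pos
    omega
  have := card_le_three (S := F)
    (Nat.mul_pos (by omega : 0 < n - 2) (by omega : 0 < E))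
    (Nat.mul_pos (by omega : 0 < n) (by omega : 0 < E))
    (Nat.mul_pos (by omega : 0 < n + 2) (by omega : 0 < E))
    hd1 hd2 hd3 (le_of_eq hsl1) (le_of_eq hsl2) (le_of_eq hsl3) hpos
  unfold numFactors
  rw [← hF]
  exact this
lemma iter_NPdata {n : ℕ} (hn : 3 ≤ n) {aa bb cc : ℚ}
    (haa : aa ≠ 0) (hbb : bb ≠ 0) (hcc : cc ≠ 0)
    (h2a : nv aa = 1) (h4b : nv bb = 2) (h8c : nv cc = 3)
    {g : Polynomial ℚ}
    (hg : g = Polynomial.X ^ (3 * n) + Polynomial.C aa * Polynomial.X ^ (2 * n - 2) +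
      Polynomial.C bb * Polynomial.X ^ (n - 2) + Polynomial.C cc) :
    ∀ k : ℕ, NPdata n (polyIter g (k + 1)) := by
  have hcomp : ∀ h : Polynomial ℚ, g.comp h =
      h ^ (3 * n) + Polynomial.C aa * h ^ (2 * n - 2) +
        Polynomial.C bb * h ^ (n - 2) + Polynomial.C cc := by
    intro h
    rw [hg]
    simp [Polynomial.add_comp, Polynomial.mul_comp, Polynomial.C_comp, Polynomial.X_pow_comp]
  intro k
  induction k with
  | zero =>
    show NPdata n (g.comp (polyIter g 0))
    rw [show polyIter g 0 = Polynomial.X from rfl, hcomp]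
    exact step_NPdata hn haa hbb hcc h2a h4b h8c (goodBase_X n)
  | succ k ih =>
    show NPdata n (g.comp (polyIter g (k + 1)))
    rw [hcomp]
    exact step_NPdata hn haa hbb hcc h2a h4b h8c (ih.goodBase hn)

/-- Section 6.5: an explicit family satisfying Sookdeo's conjecture. -/

theorem sookdeo_family
    (n : ℕ) (hn : 3 ≤ n) (a b : ℚ) (ha : 0 < a) (hb : 0 < b)
    (hva : padicValRat 2 a = 0) (hvb : padicValRat 2 b = 0)
    (c : ℕ) (hc : Odd c) (hcpos : 0 < c)
    (g : Polynomial ℚ)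
    (hg : g = Polynomial.X ^ (3 * n) + Polynomial.C (2 * a) * Polynomial.X ^ (2 * n - 2) +
      Polynomial.C (4 * b) * Polynomial.X ^ (n - 2) + Polynomial.C (8 * (c : ℚ))) :
    (∃ C : ℕ, ∀ k : ℕ, 1 ≤ k → numFactors (polyIter g k) ≤ C) ∧
    (∀ k : ℕ, 1 ≤ k → numFactors (polyIter g k) ≤ 3) ∧
    (8 : ℚ) ≤ (polyIter g 1).eval 0 ∧
    (∀ k : ℕ, 1 ≤ k → (polyIter g k).eval 0 < (polyIter g (k + 1)).eval 0) := by
  have hv2 : padicValRat 2 (2 : ℚ) = 1 := padicValRat.self (by norm_num)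
  have haq : (2 : ℚ) * a ≠ 0 := by positivity
  have hbq : (4 : ℚ) * b ≠ 0 := by positivity
  have hcq0 : (c : ℚ) ≠ 0 := by exact_mod_cast hcpos.ne'
  have hccq : (8 : ℚ) * (c : ℚ) ≠ 0 := by positivity
  have h2a : nv (2 * a) = 1 := by
    unfold nv
    rw [padicValRat.mul two_ne_zero ha.ne', hv2, hva]
    norm_num
  have h4b : nv (4 * b) = 2 := by
    unfold nv
    rw [show (4 : ℚ) * b = 2 * (2 * b) by ring,
      padicValRat.mul two_ne_zero (by positivity : (2 : ℚ) * b ≠ 0),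
      padicValRat.mul two_ne_zero hb.ne', hv2, hvb]
    norm_num
  have hvc : padicValRat 2 (c : ℚ) = 0 := by
    rw [padicValRat.of_nat]
    have hmod : c % 2 = 1 := Nat.odd_iff.mp hc
    have : ¬ (2 ∣ c) := by omega
    exact_mod_cast padicValNat.eq_zero_of_not_dvd this
  have h8c : nv (8 * (c : ℚ)) = 3 := by
    unfold nv
    rw [show (8 : ℚ) * (c : ℚ) = 2 * (2 * (2 * (c : ℚ))) by ring,
      padicValRat.mul two_ne_zero (by positivity : (2 : ℚ) * (2 * (c : ℚ)) ≠ 0),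
      padicValRat.mul two_ne_zero (by positivity : (2 : ℚ) * (c : ℚ) ≠ 0),
      padicValRat.mul two_ne_zero hcq0, hv2, hvc]
    norm_num
  have hNP := iter_NPdata hn haq hbq hccq h2a h4b h8c hg
  have hcount : ∀ k : ℕ, 1 ≤ k → numFactors (polyIter g k) ≤ 3 := by
    intro k hk
    obtain ⟨k', rfl⟩ : ∃ k', k = k' + 1 := ⟨k - 1, by omega⟩
    exact NP_count hn (hNP k')
  -- evaluation facts
  have hcq1 : (1 : ℚ) ≤ (c : ℚ) := by exact_mod_cast hcpos
  have heval : ∀ x : ℚ, 8 ≤ x → x < g.eval x := by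
    intro x hx
    have hxp : (0 : ℚ) < x := by linarith
    rw [hg]
    simp only [Polynomial.eval_add, Polynomial.eval_mul, Polynomial.eval_pow,
      Polynomial.eval_C, Polynomial.eval_X]
    have h1 : x ^ 2 ≤ x ^ (3 * n) := pow_le_pow_right₀ (by linarith) (by omega)
    have h2 : x < x ^ 2 := by nlinarith
    have h3 : 0 < 2 * a * x ^ (2 * n - 2) := by positivity
    have h4 : 0 < 4 * b * x ^ (n - 2) := by positivity
    have h5 : (8 : ℚ) ≤ 8 * (c : ℚ) := by linarith
    linarith
  have heval0 : ∀ k : ℕ, (polyIter g (k + 1)).eval 0 = g.eval ((polyIter g k).eval 0) := by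
    intro k
    rw [show polyIter g (k + 1) = g.comp (polyIter g k) from rfl, Polynomial.eval_comp]
  have hbase : (polyIter g 1).eval 0 = 8 * (c : ℚ) := by
    rw [heval0 0, show polyIter g 0 = Polynomial.X from rfl]
    simp only [Polynomial.eval_X]
    rw [hg]
    simp only [Polynomial.eval_add, Polynomial.eval_mul, Polynomial.eval_pow,
      Polynomial.eval_C, Polynomial.eval_X]
    rw [zero_pow (by omega : 3 * n ≠ 0), zero_pow (by omega : 2 * n - 2 ≠ 0),
      zero_pow (by omega : n - 2 ≠ 0)]
    ring
  have horb : ∀ k : ℕ, 8 ≤ (polyIter g (k + 1)).eval 0 := by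
    intro k
    induction k with
    | zero => rw [hbase]; linarith
    | succ k ih =>
      rw [heval0 (k + 1)]
      have := heval _ ih
      linarith
  refine ⟨⟨3, hcount⟩, hcount, by rw [hbase]; linarith, ?_⟩
  intro k hk
  obtain ⟨k', rfl⟩ : ∃ k', k = k' + 1 := ⟨k - 1, by omega⟩
  rw [heval0 (k' + 1)]
  exact heval _ (horb k')
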